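/- Let (X_n, Y_n) be ℝ²-valued random variables, (x, y) ∈ ℝ² with y ≠ 0, Σ a 2×2 covariance matrix, such that Y_n → y in probability, P(Y_n = 0) ≤ c^n for some c ∈ [0,1), and √n·(X_n − x, Y_n − y) converges in distribution to N(0, Σ). Let g(0)=1, g(t)=t otherwise. Then √n·(X_n/g(Y_n) − x/y) converges in distribution to N(0, Pᵀ Σ P) where P = (1/y, −x/y²)ᵀ. -/

import Mathlib

open MeasureTheory ProbabilityTheory Filter Topology
open scoped ENNReal NNReal

noncomputable def nz (x : ℝ) : ℝ := if x = 0 then 1 else x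

def TendstoInDistribution {Ω E : Type*} [MeasurableSpace Ω] [MeasurableSpace E]
    [TopologicalSpace E] (P : Measure Ω) (Z : ℕ → Ω → E) (μ : Measure E) : Prop :=
  ∀ f : BoundedContinuousFunction E ℝ,
    Tendsto (fun n => ∫ ω, f (Z n ω) ∂P) atTop (𝓝 (∫ x, f x ∂μ))

/-- A centered bivariate Gaussian with covariance matrix `S`, characterized through
one-dimensional projections. -/
def IsCenteredGaussian2 (S : Matrix (Fin 2) (Fin 2) ℝ) (μ : Measure (ℝ × ℝ)) : Prop :=
  ∀ a b : ℝ, μ.map (fun p => a * p.1 + b * p.2)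
    = gaussianReal 0 (a * (S 0 0 * a + S 0 1 * b) + b * (S 1 0 * a + S 1 1 * b)).toNNReal

lemma slutsky {Ω : Type*} [MeasurableSpace Ω] (P : Measure Ω) [IsProbabilityMeasure P]
    (W T : ℕ → Ω → ℝ) (hW : ∀ n, Measurable (W n)) (hT : ∀ n, Measurable (T n))
    (ν : Measure ℝ) [IsProbabilityMeasure ν]
    (hWconv : ∀ f : BoundedContinuousFunction ℝ ℝ,
      Tendsto (fun n => ∫ ω, f (W n ω) ∂P) atTop (𝓝 (∫ x, f x ∂ν)))
    (hD : ∀ δ : ℝ, 0 < δ → Tendsto (fun n => P {ω | δ ≤ |T n ω - W n ω|}) atTop (𝓝 0)) :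
    ∀ f : BoundedContinuousFunction ℝ ℝ,
      Tendsto (fun n => ∫ ω, f (T n ω) ∂P) atTop (𝓝 (∫ x, f x ∂ν)) := by
  classical
  set κ : ℕ → ProbabilityMeasure ℝ :=
    fun n => ⟨P.map (W n), Measure.isProbabilityMeasure_map (hW n).aemeasurable⟩ with hκdef
  set τ : ℕ → ProbabilityMeasure ℝ :=
    fun n => ⟨P.map (T n), Measure.isProbabilityMeasure_map (hT n).aemeasurable⟩ with hτdef
  set ν' : ProbabilityMeasure ℝ := ⟨ν, inferInstance⟩ with hν'def
  have hκconv : Tendsto κ atTop (𝓝 ν') := by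
    refine ProbabilityMeasure.tendsto_iff_forall_integral_tendsto.mpr fun f => ?_
    have : ∀ n, ∫ x, f x ∂(κ n : Measure ℝ) = ∫ ω, f (W n ω) ∂P := fun n =>
      integral_map (hW n).aemeasurable f.continuous.aestronglyMeasurable
    simp only [this]
    exact hWconv f
  -- closed set bound for τ
  have hclosed : ∀ F : Set ℝ, IsClosed F →
      (atTop.limsup fun n => (τ n : Measure ℝ) F) ≤ ν F := by
    intro F hF
    have key : ∀ δ : ℝ, 0 < δ →
        (atTop.limsup fun n => (τ n : Measure ℝ) F) ≤ ν (Metric.cthickening δ F) := by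
      intro δ hδ
      have hcth : IsClosed (Metric.cthickening δ F) := Metric.isClosed_cthickening
      have hκlim : (atTop.limsup fun n => (κ n : Measure ℝ) (Metric.cthickening δ F))
          ≤ (ν' : Measure ℝ) (Metric.cthickening δ F) :=
        ProbabilityMeasure.limsup_measure_closed_le_of_tendsto hκconv hcth
      refine ENNReal.le_of_forall_pos_le_add fun ε hε _ => ?_
      have hε' : (ε : ℝ≥0∞) / 2 ≠ 0 := by
        simp [ENNReal.div_eq_zero_iff, hε.ne']
      have hev1 : ∀ᶠ n in atTop,
          (κ n : Measure ℝ) (Metric.cthickening δ F) < ν (Metric.cthickening δ F) + ε / 2 := by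
        refine eventually_lt_of_limsup_lt (lt_of_le_of_lt hκlim ?_)
        exact ENNReal.lt_add_right (measure_ne_top ν _) hε'
      have hev2 : ∀ᶠ n in atTop, P {ω | δ ≤ |T n ω - W n ω|} ≤ ε / 2 :=
        ENNReal.tendsto_nhds_zero.mp (hD δ hδ) _ (pos_iff_ne_zero.mpr hε')
      have hbound : ∀ᶠ n in atTop,
          (τ n : Measure ℝ) F ≤ ν (Metric.cthickening δ F) + ε := by
        filter_upwards [hev1, hev2] with n h1 h2
        have hsub : T n ⁻¹' F ⊆
            (W n ⁻¹' Metric.cthickening δ F) ∪ {ω | δ ≤ |T n ω - W n ω|} := by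
          intro ω hω
          by_cases hd : δ ≤ |T n ω - W n ω|
          · exact Or.inr hd
          · push_neg at hd
            left
            refine Metric.thickening_subset_cthickening δ F ?_
            rw [Metric.mem_thickening_iff]
            exact ⟨T n ω, hω, by rwa [Real.dist_eq, abs_sub_comm]⟩
        have : (τ n : Measure ℝ) F = P (T n ⁻¹' F) :=
          Measure.map_apply (hT n) hF.measurableSet
        rw [this]
        calc P (T n ⁻¹' F)
            ≤ P (W n ⁻¹' Metric.cthickening δ F) + P {ω | δ ≤ |T n ω - W n ω|} :=
              le_trans (measure_mono hsub) (measure_union_le _ _)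
          _ ≤ (ν (Metric.cthickening δ F) + ε / 2) + ε / 2 := by
              exact add_le_add (le_of_lt
                ((Measure.map_apply (hW n) hcth.measurableSet).symm.trans_lt h1)) h2
          _ = ν (Metric.cthickening δ F) + ε := by
              rw [add_assoc, ENNReal.add_halves]
      exact limsup_le_of_le (by isBoundedDefault) hbound
    have hlim : Tendsto (fun δ => ν (Metric.cthickening δ F)) (𝓝[>] 0) (𝓝 (ν F)) := by
      refine Tendsto.mono_left (tendsto_measure_cthickening_of_isClosed ⟨1, one_pos, measure_ne_top ν _⟩ hF) nhdsWithin_le_nhds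
    refine ge_of_tendsto hlim ?_
    filter_upwards [self_mem_nhdsWithin] with δ (hδ : (0:ℝ) < δ) using key δ hδ
  -- open set bound, NNReal level
  have h_opens : ∀ G : Set ℝ, IsOpen G → ν' G ≤ atTop.liminf (fun n => τ n G) := by
    intro G hG
    have hee : (ν' : Measure ℝ) G ≤ atTop.liminf fun n => (τ n : Measure ℝ) G := by
      refine le_measure_liminf_of_limsup_measure_compl_le hG.measurableSet ?_
      exact hclosed Gᶜ hG.isClosed_compl
    have aux : (↑(atTop.liminf fun n => τ n G) : ℝ≥0∞)
        = atTop.liminf fun n => ((τ n G : ℝ≥0) : ℝ≥0∞) := by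
      refine Monotone.map_liminf_of_continuousAt (F := atTop) ENNReal.coe_mono (fun n => τ n G)
        ENNReal.continuous_coe.continuousAt ?_ ?_
      · exact IsBoundedUnder.isCoboundedUnder_ge ⟨1, by
          simp only [eventually_map, eventually_atTop]
          exact ⟨0, fun n _ => ProbabilityMeasure.apply_le_one _ _⟩⟩
      · exact ⟨0, by simp⟩
    rw [← ENNReal.coe_le_coe, aux]
    simp only [ProbabilityMeasure.ennreal_coeFn_eq_coeFn_toMeasure]
    exact hee
  have hτconv : Tendsto τ atTop (𝓝 ν') :=
    MeasureTheory.tendsto_of_forall_isOpen_le_liminf h_opens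
  intro f
  have := ProbabilityMeasure.tendsto_iff_forall_integral_tendsto.mp hτconv f
  have heq : ∀ n, ∫ x, f x ∂(τ n : Measure ℝ) = ∫ ω, f (T n ω) ∂P := fun n =>
    integral_map (hT n).aemeasurable f.continuous.aestronglyMeasurable
  have h' := this
  simp only [heq] at h'
  exact h'

theorem stmt_9 {Ω : Type*} [MeasurableSpace Ω] (P : Measure Ω) [IsProbabilityMeasure P]
    (X Y : ℕ → Ω → ℝ) (hX : ∀ n, Measurable (X n)) (hY : ∀ n, Measurable (Y n))
    (x y : ℝ) (hy : y ≠ 0)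
    (S : Matrix (Fin 2) (Fin 2) ℝ) (hS : S.PosSemidef)
    (hYconv : TendstoInMeasure P Y atTop (fun _ => y))
    (c : ℝ) (hc : c ∈ Set.Ico (0 : ℝ) 1)
    (hzero : ∀ n, P {ω | Y n ω = 0} ≤ ENNReal.ofReal (c ^ n))
    (μS : Measure (ℝ × ℝ)) [IsProbabilityMeasure μS] (hgauss : IsCenteredGaussian2 S μS)
    (hclt : TendstoInDistribution P
      (fun n ω => (Real.sqrt n * (X n ω - x), Real.sqrt n * (Y n ω - y))) μS) :
    TendstoInDistribution P
      (fun n ω => Real.sqrt n * (X n ω / nz (Y n ω) - x / y))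
      (gaussianReal 0
        ((1 / y) * (S 0 0 * (1 / y) + S 0 1 * (-x / y ^ 2))
          + (-x / y ^ 2) * (S 1 0 * (1 / y) + S 1 1 * (-x / y ^ 2))).toNNReal) := by
  classical
  set h : ℝ × ℝ → ℝ := fun p => (1 / y) * p.1 + (-x / y ^ 2) * p.2 with hhdef
  have hcont : Continuous h := by fun_prop
  have hmeas : Measurable h := hcont.measurable
  set ν : Measure ℝ := μS.map h with hνdef
  haveI hνprob : IsProbabilityMeasure ν := Measure.isProbabilityMeasure_map hmeas.aemeasurable
  have hνeq : gaussianReal 0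
      ((1 / y) * (S 0 0 * (1 / y) + S 0 1 * (-x / y ^ 2))
        + (-x / y ^ 2) * (S 1 0 * (1 / y) + S 1 1 * (-x / y ^ 2))).toNNReal = ν :=
    (hgauss (1 / y) (-x / y ^ 2)).symm
  set T : ℕ → Ω → ℝ := fun n ω => Real.sqrt n * (X n ω / nz (Y n ω) - x / y) with hTdef
  set W : ℕ → Ω → ℝ := fun n ω =>
    (1 / y) * (Real.sqrt n * (X n ω - x)) + (-x / y ^ 2) * (Real.sqrt n * (Y n ω - y)) with hWdef
  have hnzm : Measurable nz := by
    unfold nz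
    exact Measurable.ite measurableSet_eq measurable_const measurable_id
  have hTm : ∀ n, Measurable (T n) := fun n =>
    (((hX n).div (hnzm.comp (hY n))).sub measurable_const).const_mul _
  have hWm : ∀ n, Measurable (W n) := fun n =>
    ((((hX n).sub measurable_const).const_mul _).const_mul _).add
      ((((hY n).sub measurable_const).const_mul _).const_mul _)
  have hWconv : ∀ f : BoundedContinuousFunction ℝ ℝ,
      Tendsto (fun n => ∫ ω, f (W n ω) ∂P) atTop (𝓝 (∫ t, f t ∂ν)) := by
    intro f
    have h2 : ∫ t, f t ∂ν = ∫ p, f (h p) ∂μS :=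
      integral_map hmeas.aemeasurable f.continuous.aestronglyMeasurable
    rw [h2]
    exact hclt (f.compContinuous ⟨h, hcont⟩)
  set κ : ℕ → ProbabilityMeasure ℝ :=
    fun n => ⟨P.map (W n), Measure.isProbabilityMeasure_map (hWm n).aemeasurable⟩ with hκdef
  set ν' : ProbabilityMeasure ℝ := ⟨ν, hνprob⟩ with hν'def
  have hκconv : Tendsto κ atTop (𝓝 ν') := by
    refine ProbabilityMeasure.tendsto_iff_forall_integral_tendsto.mpr fun f => ?_
    have h1 : ∀ n, ∫ t, f t ∂(κ n : Measure ℝ) = ∫ ω, f (W n ω) ∂P := fun n =>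
      integral_map (hWm n).aemeasurable f.continuous.aestronglyMeasurable
    simp only [h1]
    exact hWconv f
  -- tail bound for ν
  have htail : ∀ ε' : ℝ≥0∞, 0 < ε' → ∃ M : ℝ, 1 ≤ M ∧ ν {t | M ≤ |t|} < ε' := by
    intro ε' hε'
    have hcl : ∀ k : ℕ, IsClosed {t : ℝ | (k : ℝ) ≤ |t|} := fun k =>
      isClosed_le continuous_const continuous_abs
    have hmb : ∀ k : ℕ, NullMeasurableSet {t : ℝ | (k : ℝ) ≤ |t|} ν := fun k =>
      (hcl k).measurableSet.nullMeasurableSet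
    have hanti : Antitone fun k : ℕ => {t : ℝ | (k : ℝ) ≤ |t|} := by
      intro k m hkm t ht
      exact le_trans (show ((k:ℕ):ℝ) ≤ ((m:ℕ):ℝ) by exact_mod_cast hkm) ht
    have hiInter : ⋂ k : ℕ, {t : ℝ | (k : ℝ) ≤ |t|} = ∅ := by
      ext t
      simp only [Set.mem_iInter, Set.mem_setOf_eq, Set.mem_empty_iff_false, iff_false,
        not_forall, not_le]
      obtain ⟨k, hk⟩ := exists_nat_gt |t|
      exact ⟨k, hk⟩
    have htd := tendsto_measure_iInter_atTop hmb hanti ⟨0, measure_ne_top ν _⟩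
    rw [hiInter, measure_empty] at htd
    obtain ⟨k, hk1, hk2⟩ := ((htd.eventually (gt_mem_nhds hε')).and (eventually_ge_atTop 1)).exists
    exact ⟨(k : ℝ), by exact_mod_cast hk2, hk1⟩
  have hc0 : Tendsto (fun n : ℕ => ENNReal.ofReal (c ^ n)) atTop (𝓝 0) := by
    have h1 := tendsto_pow_atTop_nhds_zero_of_lt_one hc.1 hc.2
    simpa using ENNReal.tendsto_ofReal h1
  have hD : ∀ δ : ℝ, 0 < δ → Tendsto (fun n => P {ω | δ ≤ |T n ω - W n ω|}) atTop (𝓝 0) := by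
    intro δ hδ
    refine ENNReal.tendsto_nhds_zero.mpr fun ε hε => ?_
    have hε2 : (0 : ℝ≥0∞) < ε / 2 := ENNReal.div_pos hε.ne' ENNReal.ofNat_ne_top
    have hε4 : (0 : ℝ≥0∞) < ε / 2 / 2 := ENNReal.div_pos hε2.ne' ENNReal.ofNat_ne_top
    obtain ⟨M, hM1, hMtail⟩ := htail (ε / 2 / 2) hε4
    have hMpos : (0 : ℝ) < M := lt_of_lt_of_le one_pos hM1
    have hylt : (0 : ℝ) < |y| := abs_pos.mpr hy
    set δ₂ : ℝ := min (|y| / 2) (δ * |y| / (4 * M)) with hδ₂def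
    have hδ₂pos : 0 < δ₂ := lt_min (by positivity) (by positivity)
    set A : Set ℝ := {t | M ≤ |t|} with hAdef
    have hAclosed : IsClosed A := isClosed_le continuous_const continuous_abs
    have hlimA := ProbabilityMeasure.limsup_measure_closed_le_of_tendsto hκconv hAclosed
    have hev3 := eventually_lt_of_limsup_lt (lt_of_le_of_lt hlimA hMtail)
    have hev1 : ∀ᶠ n in atTop, P {ω | Y n ω = 0} ≤ ε / 2 := by
      filter_upwards [ENNReal.tendsto_nhds_zero.mp hc0 _ hε2] with n hn using
        le_trans (hzero n) hn
    have hev2 : ∀ᶠ n in atTop, P {ω | δ₂ ≤ dist (Y n ω) y} ≤ ε / 2 / 2 :=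
      ENNReal.tendsto_nhds_zero.mp (tendstoInMeasure_iff_dist.mp hYconv δ₂ hδ₂pos) _ hε4
    filter_upwards [hev1, hev2, hev3] with n h1 h2 h3
    have hincl : {ω | δ ≤ |T n ω - W n ω|} ⊆
        {ω | Y n ω = 0} ∪ ({ω | δ₂ ≤ dist (Y n ω) y} ∪ W n ⁻¹' A) := by
      intro ω hω
      by_contra hmem
      simp only [Set.mem_union, Set.mem_setOf_eq, Set.mem_preimage, hAdef, not_or,
        not_le] at hmem
      obtain ⟨hY0, hdist, hWb⟩ := hmem
      have hω' : δ ≤ |T n ω - W n ω| := hω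
      have hnzY : nz (Y n ω) = Y n ω := by simp [nz, hY0]
      have hid : T n ω - W n ω = W n ω * ((y - Y n ω) / Y n ω) := by
        simp only [hTdef, hWdef, hnzY]
        field_simp
        ring
      have h6 : |y - Y n ω| < δ₂ := by
        rw [abs_sub_comm]
        rwa [Real.dist_eq] at hdist
      have h9 : δ₂ ≤ |y| / 2 := min_le_left _ _
      have hYlb : |y| / 2 ≤ |Y n ω| := by
        have h8 := abs_sub_abs_le_abs_sub y (Y n ω)
        linarith
      have hYvpos : (0 : ℝ) < |Y n ω| := by linarith
      have h7 : δ * |Y n ω| ≤ |W n ω| * |y - Y n ω| := by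
        have habs : |T n ω - W n ω| = |W n ω| * |y - Y n ω| / |Y n ω| := by
          rw [hid, abs_mul, abs_div, mul_div_assoc]
        rw [habs] at hω'
        exact (le_div_iff₀ hYvpos).mp hω'
      have hC : |W n ω| * |y - Y n ω| ≤ M * δ₂ :=
        mul_le_mul hWb.le h6.le (abs_nonneg _) hMpos.le
      have hd2a : δ₂ ≤ δ * |y| / (4 * M) := min_le_right _ _
      have hD2 : M * δ₂ ≤ δ * |y| / 4 := by
        calc M * δ₂ ≤ M * (δ * |y| / (4 * M)) := mul_le_mul_of_nonneg_left hd2a hMpos.le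
          _ = δ * |y| / 4 := by field_simp
      have hA2 : δ * (|y| / 2) ≤ δ * |Y n ω| := mul_le_mul_of_nonneg_left hYlb hδ.le
      nlinarith [mul_pos hδ hylt]
    calc P {ω | δ ≤ |T n ω - W n ω|}
        ≤ P ({ω | Y n ω = 0} ∪ ({ω | δ₂ ≤ dist (Y n ω) y} ∪ W n ⁻¹' A)) :=
          measure_mono hincl
      _ ≤ P {ω | Y n ω = 0} + P ({ω | δ₂ ≤ dist (Y n ω) y} ∪ W n ⁻¹' A) :=
          measure_union_le _ _
      _ ≤ P {ω | Y n ω = 0} + (P {ω | δ₂ ≤ dist (Y n ω) y} + P (W n ⁻¹' A)) :=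
          add_le_add_right (measure_union_le _ _) _
      _ ≤ ε / 2 + (ε / 2 / 2 + ε / 2 / 2) := by
          refine add_le_add h1 (add_le_add h2 ?_)
          rw [← Measure.map_apply (hWm n) hAclosed.measurableSet]
          exact h3.le
      _ = ε := by rw [ENNReal.add_halves, ENNReal.add_halves]
  intro f
  rw [hνeq]
  exact slutsky P W T hWm hTm ν hWconv hD f
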